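/- arXiv:1304.3198 — 2 statements merged into one kernel-verified Lean document; each statement's English description precedes it below -/
import Mathlib

section
/- Let 1 < α < 2, 0 < p < α − 1 and T > 0. Let X be a Banach space, let M₁ : [0, T] → [0, ∞) be measurable with M₁ ∈ L^{1/p}([0, T]), and let f : [0, T] → X be strongly (Bochner) measurable with ‖f(s)‖ ≤ M₁(s) for almost every s ∈ [0, T]. Define G(t) = ∫₀^t (t − s)^{α−2} f(s) ds for t ∈ [0, T]. Then for all 0 ≤ τ₁ ≤ τ₂ ≤ T, ‖G(τ₂) − G(τ₁)‖ ≤ 2 ((1 − p)/(α − 1 − p))^{1−p} · ‖M₁‖_{1/p} · (τ₂ − τ₁)^{α−1−p}; in particular G is Hölder continuous on [0, T] with exponent α − 1 − p. -/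
open MeasureTheory Set
open scoped NNReal ENNReal

/-- `(a - b)^q ≤ a^q - b^q` for `0 ≤ b ≤ a`, `1 ≤ q`. -/
lemma aux_rpow_sub_le {a b q : ℝ} (hb : 0 ≤ b) (hba : b ≤ a) (hq : 1 ≤ q) :
    (a - b) ^ q ≤ a ^ q - b ^ q := by
  have h1 : 0 ≤ a - b := sub_nonneg.2 hba
  have h := NNReal.add_rpow_le_rpow_add (a - b).toNNReal b.toNNReal hq
  have h2 : ((a - b).toNNReal : ℝ) ^ q + (b.toNNReal : ℝ) ^ q ≤
      (((a - b).toNNReal + b.toNNReal : ℝ≥0) : ℝ) ^ q := by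
    rw [← NNReal.coe_rpow, ← NNReal.coe_rpow, ← NNReal.coe_rpow]
    exact_mod_cast h
  rw [NNReal.coe_add, Real.coe_toNNReal _ h1, Real.coe_toNNReal _ hb] at h2
  have : a - b + b = a := by ring
  rw [this] at h2
  linarith

/-- Membership in `ℒ^{ofReal P}` from integrability of the `P`-th power, for a.e. nonneg `g`. -/
lemma aux_memLp_of_integrable_rpow {μ : Measure ℝ} {g : ℝ → ℝ}
    (hg : AEStronglyMeasurable g μ) (hg0 : 0 ≤ᵐ[μ] g) {P : ℝ} (hP : 0 < P)
    (hint : Integrable (fun x => g x ^ P) μ) : MemLp g (ENNReal.ofReal P) μ := by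
  have hq0 : (ENNReal.ofReal P) ≠ 0 := by
    simp [ENNReal.ofReal_eq_zero, not_le, hP]
  have hqt : (ENNReal.ofReal P) ≠ ∞ := ENNReal.ofReal_ne_top
  rw [← memLp_norm_rpow_iff hg hq0 hqt, ENNReal.div_self hq0 hqt,
    memLp_one_iff_integrable, ENNReal.toReal_ofReal hP.le]
  refine hint.congr ?_
  filter_upwards [hg0] with x hx
  rw [Real.norm_of_nonneg hx]

/-- Conjugate exponents in `ℝ≥0∞`. -/
lemma aux_conj_ennreal {P Q : ℝ} (hPQ : Real.HolderConjugate P Q) :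
    1 / ENNReal.ofReal P + 1 / ENNReal.ofReal Q = 1 := by
  rw [one_div, one_div, ← ENNReal.ofReal_inv_of_pos hPQ.pos,
    ← ENNReal.ofReal_inv_of_pos hPQ.symm.pos,
    ← ENNReal.ofReal_add (inv_nonneg.2 hPQ.pos.le) (inv_nonneg.2 hPQ.symm.pos.le),
    hPQ.inv_add_inv_eq_one, ENNReal.ofReal_one]

/-- Integrability of `k • f` from conjugate `ℒp` membership. -/
lemma aux_integrable_smul {X : Type*} [NormedAddCommGroup X] [NormedSpace ℝ X]
    {μ : Measure ℝ} {P Q : ℝ≥0∞} (hPQ : 1 / P + 1 / Q = 1) {k : ℝ → ℝ} {f : ℝ → X}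
    (hk : MemLp k P μ) (hf : MemLp f Q μ) : Integrable (fun s => k s • f s) μ := by
  haveI : ENNReal.HolderTriple P Q 1 := ⟨by simpa [one_div] using hPQ⟩
  have := MemLp.smul (r := 1) hf hk
  exact memLp_one_iff_integrable.mp this

/-- Integrability of the kernel `s ↦ (t-s)^c'` on `Ioc a b` for `-1 < c'`. -/
lemma aux_kernel_integrableOn {c' : ℝ} (hc' : -1 < c') (t a b : ℝ) :
    IntegrableOn (fun s => (t - s) ^ c') (Ioc a b) volume := by
  have h := (intervalIntegral.intervalIntegrable_rpow' (a := t - b) (b := t - a) hc').comp_sub_left t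
  simpa using h.2

/-- Value of the kernel integral. -/
lemma aux_kernel_integral {c' : ℝ} (hc' : -1 < c') {t a b : ℝ} (hab : a ≤ b) :
    ∫ s in Ioc a b, (t - s) ^ c' = ((t - a) ^ (c' + 1) - (t - b) ^ (c' + 1)) / (c' + 1) := by
  rw [← intervalIntegral.integral_of_le hab]
  rw [intervalIntegral.integral_comp_sub_left (fun x => x ^ c') t]
  rw [integral_rpow (Or.inl hc')]

/-- a.e. statements on `Ioc` from pointwise statements on `Ioo`. -/
lemma aux_ae_Ioc {Pr : ℝ → Prop} {a b : ℝ} (h : ∀ x ∈ Ioo a b, Pr x) :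
    ∀ᵐ x ∂(volume.restrict (Ioc a b)), Pr x := by
  rw [← Measure.restrict_congr_set Ioo_ae_eq_Ioc]
  exact (ae_restrict_iff' measurableSet_Ioo).2 (Filter.Eventually.of_forall h)

/-- a.e. strong measurability on `Ioc` from continuity on `Ioo`. -/
lemma aux_aesm {g : ℝ → ℝ} {a b : ℝ} (hg : ContinuousOn g (Ioo a b)) :
    AEStronglyMeasurable g (volume.restrict (Ioc a b)) := by
  rw [← Measure.restrict_congr_set Ioo_ae_eq_Ioc]
  exact hg.aestronglyMeasurable measurableSet_Ioo

/-- Continuity of the kernel on `Ioo a b` for `b ≤ t`. -/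
lemma aux_kernel_contOn (c' t a b : ℝ) (hbt : b ≤ t) :
    ContinuousOn (fun s => (t - s) ^ c') (Ioo a b) := by
  refine ((continuous_const.sub continuous_id).continuousOn).rpow_const fun x hx => ?_
  exact Or.inl (ne_of_gt (sub_pos.2 (lt_of_lt_of_le hx.2 hbt)))

/-- Hölder bound for `∫ k • f` with `‖f‖ ≤ M` a.e. -/
lemma aux_holder_bound {X : Type*} [NormedAddCommGroup X] [NormedSpace ℝ X]
    {μ : Measure ℝ} {P Q : ℝ} (hPQ : Real.HolderConjugate P Q)
    {k M : ℝ → ℝ} {f : ℝ → X}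
    (hk : AEStronglyMeasurable k μ) (hk0 : 0 ≤ᵐ[μ] k)
    (hkP : Integrable (fun s => k s ^ P) μ)
    (hM0 : 0 ≤ᵐ[μ] M)
    (hMQ : MemLp M (ENNReal.ofReal Q) μ)
    (hfM : ∀ᵐ s ∂μ, ‖f s‖ ≤ M s) :
    ‖∫ s, k s • f s ∂μ‖ ≤ (∫ s, k s ^ P ∂μ) ^ (1 / P) * (∫ s, M s ^ Q ∂μ) ^ (1 / Q) := by
  have hkMem : MemLp k (ENNReal.ofReal P) μ :=
    aux_memLp_of_integrable_rpow hk hk0 hPQ.pos hkP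
  have hkM : Integrable (fun s => k s * M s) μ := by
    have : Integrable (fun s => k s • M s) μ :=
      aux_integrable_smul (aux_conj_ennreal hPQ) hkMem hMQ
    simpa [smul_eq_mul] using this
  calc ‖∫ s, k s • f s ∂μ‖ ≤ ∫ s, k s * M s ∂μ := by
        refine norm_integral_le_of_norm_le hkM ?_
        filter_upwards [hk0, hfM] with s h1 h2
        rw [norm_smul, Real.norm_of_nonneg h1]
        exact mul_le_mul_of_nonneg_left h2 h1
    _ ≤ _ := integral_mul_le_Lp_mul_Lq_of_nonneg hPQ hk0 hM0 hkMem hMQ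

/-- Hölder continuity of the fractional convolution: if `‖f(s)‖ ≤ M₁(s)` a.e. with
`M₁ ∈ L^{1/p}([0,T])` and `G(t) = ∫₀^t (t-s)^{α-2} f(s) ds`, then for
`0 ≤ τ₁ ≤ τ₂ ≤ T`,
`‖G(τ₂) - G(τ₁)‖ ≤ 2 ((1-p)/(α-1-p))^{1-p} ‖M₁‖_{1/p} (τ₂-τ₁)^{α-1-p}`. -/
theorem fractional_convolution_holder
    {X : Type*} [NormedAddCommGroup X] [NormedSpace ℝ X] [CompleteSpace X]
    (α p T : ℝ) (hα₁ : 1 < α) (hα₂ : α < 2) (hp₀ : 0 < p) (hpα : p < α - 1)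
    (hT : 0 < T)
    (M₁ : ℝ → ℝ) (hM₁meas : Measurable M₁) (hM₁nonneg : ∀ s, 0 ≤ M₁ s)
    (hM₁int : IntegrableOn (fun s => M₁ s ^ (1 / p)) (Set.Icc 0 T))
    (f : ℝ → X)
    (hfmeas : AEStronglyMeasurable f (volume.restrict (Set.Icc 0 T)))
    (hfbound : ∀ᵐ s ∂volume.restrict (Set.Icc 0 T), ‖f s‖ ≤ M₁ s)
    (G : ℝ → X)
    (hG : ∀ t, G t = ∫ s in (0:ℝ)..t, (t - s) ^ (α - 2) • f s) :
    ∀ τ₁ τ₂ : ℝ, 0 ≤ τ₁ → τ₁ ≤ τ₂ → τ₂ ≤ T →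
      ‖G τ₂ - G τ₁‖ ≤
        2 * ((1 - p) / (α - 1 - p)) ^ (1 - p) *
          (∫ s in (0:ℝ)..T, M₁ s ^ (1 / p)) ^ p * (τ₂ - τ₁) ^ (α - 1 - p) := by
  intro τ₁ τ₂ hτ₁ h₁₂ hτ₂
  have hp1 : p < 1 := by linarith
  have h1p : 0 < 1 - p := by linarith
  set c : ℝ := α - 2 with hc_def
  set P : ℝ := (1 - p)⁻¹ with hP_def
  set Q : ℝ := p⁻¹ with hQ_def
  have hPQ : Real.HolderConjugate P Q :=
    Real.holderConjugate_iff.mpr ⟨(one_lt_inv₀ h1p).mpr (by linarith), by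
      rw [hP_def, hQ_def, inv_inv, inv_inv]; ring⟩
  have hc1 : -1 < c := by simp only [hc_def]; linarith
  have hc0 : c < 0 := by simp only [hc_def]; linarith
  set cP : ℝ := c * P with hcP_def
  have hcP : -1 < cP := by
    rw [hcP_def, hP_def, ← div_eq_mul_inv, lt_div_iff₀ h1p]
    simp only [hc_def]; linarith
  have hcP0 : cP ≤ 0 := mul_nonpos_of_nonpos_of_nonneg hc0.le (by positivity)
  set β : ℝ := cP + 1 with hβ_def
  have hβ0 : 0 < β := by linarith
  have hβ1 : β ≤ 1 := by linarith
  have hβval : β = (α - 1 - p) / (1 - p) := by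
    rw [hβ_def, hcP_def, hP_def, hc_def]; field_simp; ring
  set D : ℝ := τ₂ - τ₁ with hD_def
  have hD : 0 ≤ D := by simp only [hD_def]; linarith
  set K : ℝ := ∫ s in Ioc (0:ℝ) T, M₁ s ^ Q with hK_def
  have hKint : IntegrableOn (fun s => M₁ s ^ Q) (Ioc 0 T) volume := by
    have := hM₁int.mono_set Ioc_subset_Icc_self
    simpa [one_div, hQ_def] using this
  have hK0 : 0 ≤ K :=
    integral_nonneg fun s => Real.rpow_nonneg (hM₁nonneg s) _
  -- M and f in ℒ^{1/p} on Icc 0 T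
  have hMT : MemLp M₁ (ENNReal.ofReal Q) (volume.restrict (Icc 0 T)) := by
    refine aux_memLp_of_integrable_rpow hM₁meas.aestronglyMeasurable
      (Filter.Eventually.of_forall hM₁nonneg) (by positivity) ?_
    simpa [one_div, hQ_def, IntegrableOn] using hM₁int
  have hfT : MemLp f (ENNReal.ofReal Q) (volume.restrict (Icc 0 T)) := by
    refine hMT.of_le hfmeas ?_
    filter_upwards [hfbound] with s hs
    exact hs.trans (le_abs_self _)
  -- restriction facts
  have hrest : ∀ {a b : ℝ}, 0 ≤ a → b ≤ T →
      volume.restrict (Ioc a b) ≤ volume.restrict (Icc 0 T) := by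
    intro a b ha hb
    exact Measure.restrict_mono
      (show Ioc a b ⊆ Icc 0 T from fun x hx => ⟨le_trans ha hx.1.le, hx.2.trans hb⟩) le_rfl
  -- power of kernel integrable & value
  have kfact : ∀ t a b : ℝ, b ≤ t →
      Integrable (fun s => ((t - s) ^ c) ^ P) (volume.restrict (Ioc a b)) := by
    intro t a b hbt
    refine (aux_kernel_integrableOn hcP t a b).congr (aux_ae_Ioc fun x hx => ?_)
    exact Real.rpow_mul (sub_nonneg.2 (le_trans hx.2.le hbt)) c P
  have kval : ∀ t a b : ℝ, a ≤ b → b ≤ t →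
      ∫ s in Ioc a b, ((t - s) ^ c) ^ P =
        ((t - a) ^ β - (t - b) ^ β) / β := by
    intro t a b hab hbt
    have : ∫ s in Ioc a b, ((t - s) ^ c) ^ P = ∫ s in Ioc a b, (t - s) ^ cP := by
      refine setIntegral_congr_fun measurableSet_Ioc fun x hx => ?_
      rw [← Real.rpow_mul (sub_nonneg.2 (le_trans hx.2 hbt))]
    rw [this, aux_kernel_integral hcP hab]
  -- the generic piece bound
  have piece : ∀ (a b : ℝ) (k : ℝ → ℝ), 0 ≤ a → a ≤ b → b ≤ T →
      AEStronglyMeasurable k (volume.restrict (Ioc a b)) →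
      (0 ≤ᵐ[volume.restrict (Ioc a b)] k) →
      Integrable (fun s => k s ^ P) (volume.restrict (Ioc a b)) →
      (∫ s in Ioc a b, k s ^ P) ≤ D ^ β / β →
      ‖∫ s in Ioc a b, k s • f s‖ ≤
        ((1 - p) / (α - 1 - p)) ^ (1 - p) * K ^ p * D ^ (α - 1 - p) := by
    intro a b k ha hab hb hkm hk0 hkP hkb
    have hμ := hrest ha hb
    have hMS : MemLp M₁ (ENNReal.ofReal Q) (volume.restrict (Ioc a b)) :=
      hMT.mono_measure hμ
    have hfMS : ∀ᵐ s ∂(volume.restrict (Ioc a b)), ‖f s‖ ≤ M₁ s :=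
      ae_restrict_of_ae_restrict_of_subset
        (show Ioc a b ⊆ Icc 0 T from fun x hx => ⟨le_trans ha hx.1.le, hx.2.trans hb⟩) hfbound
    have h0 := aux_holder_bound hPQ hkm hk0 hkP
      (Filter.Eventually.of_forall hM₁nonneg) hMS hfMS
    have h1P : 1 / P = 1 - p := by rw [hP_def, one_div, inv_inv]
    have h1Q : 1 / Q = p := by rw [hQ_def, one_div, inv_inv]
    rw [h1P, h1Q] at h0
    refine h0.trans ?_
    have e1 : (∫ s in Ioc a b, k s ^ P) ^ (1 - p) ≤ (D ^ β / β) ^ (1 - p) := by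
      refine Real.rpow_le_rpow ?_ hkb (by linarith)
      refine integral_nonneg_of_ae ?_
      filter_upwards [hk0] with s hs
      exact Real.rpow_nonneg hs _
    have e2 : (∫ s in Ioc a b, M₁ s ^ Q) ^ p ≤ K ^ p := by
      refine Real.rpow_le_rpow ?_ ?_ hp₀.le
      · exact integral_nonneg fun s => Real.rpow_nonneg (hM₁nonneg s) _
      · refine setIntegral_mono_set hKint
          (Filter.Eventually.of_forall fun s => Real.rpow_nonneg (hM₁nonneg s) _) ?_
        exact HasSubset.Subset.eventuallyLE fun x hx =>
          ⟨lt_of_le_of_lt ha hx.1, hx.2.trans hb⟩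
    have e3 : (D ^ β / β) ^ (1 - p) =
        ((1 - p) / (α - 1 - p)) ^ (1 - p) * D ^ (α - 1 - p) := by
      rw [div_eq_mul_inv, Real.mul_rpow (Real.rpow_nonneg hD _) (by positivity),
        ← Real.rpow_mul hD]
      have hβm : β * (1 - p) = α - 1 - p := by
        rw [hβval]; field_simp
      have hβinv : β⁻¹ = (1 - p) / (α - 1 - p) := by
        rw [hβval, inv_div]
      rw [hβm, hβinv, mul_comm]
    calc (∫ s in Ioc a b, k s ^ P) ^ (1 - p) * (∫ s in Ioc a b, M₁ s ^ Q) ^ p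
        ≤ (D ^ β / β) ^ (1 - p) * K ^ p := by
          refine mul_le_mul e1 e2 ?_ ?_
          · exact Real.rpow_nonneg
              (integral_nonneg fun s => Real.rpow_nonneg (hM₁nonneg s) _) _
          · positivity
      _ = ((1 - p) / (α - 1 - p)) ^ (1 - p) * K ^ p * D ^ (α - 1 - p) := by
          rw [e3]; ring
  -- membership / integrability of the pieces
  have hfS : ∀ {a b : ℝ}, 0 ≤ a → b ≤ T →
      MemLp f (ENNReal.ofReal Q) (volume.restrict (Ioc a b)) :=
    fun ha hb => hfT.mono_measure (hrest ha hb)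
  have kmem : ∀ t a b : ℝ, b ≤ t →
      MemLp (fun s => (t - s) ^ c) (ENNReal.ofReal P) (volume.restrict (Ioc a b)) := by
    intro t a b hbt
    exact aux_memLp_of_integrable_rpow (aux_aesm (aux_kernel_contOn c t a b hbt))
      (aux_ae_Ioc fun x hx => Real.rpow_nonneg (sub_nonneg.2 (le_trans hx.2.le hbt)) _)
      hPQ.pos (kfact t a b hbt)
  have kint : ∀ t a b : ℝ, 0 ≤ a → b ≤ T → b ≤ t →
      Integrable (fun s => (t - s) ^ c • f s) (volume.restrict (Ioc a b)) :=
    fun t a b ha hb hbt =>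
      aux_integrable_smul (aux_conj_ennreal hPQ) (kmem t a b hbt) (hfS ha hb)
  have hτ₂0 : 0 ≤ τ₂ := le_trans hτ₁ h₁₂
  have hτ₁T : τ₁ ≤ T := le_trans h₁₂ hτ₂
  have hii : ∀ t a b : ℝ, 0 ≤ a → a ≤ b → b ≤ T → b ≤ t →
      IntervalIntegrable (fun s => (t - s) ^ c • f s) volume a b :=
    fun t a b ha hab hb hbt =>
      (intervalIntegrable_iff_integrableOn_Ioc_of_le hab).2 (kint t a b ha hb hbt)
  -- decomposition
  have split : G τ₂ =
      (∫ s in Ioc 0 τ₁, (τ₂ - s) ^ c • f s) + ∫ s in Ioc τ₁ τ₂, (τ₂ - s) ^ c • f s := by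
    rw [hG τ₂, ← intervalIntegral.integral_add_adjacent_intervals
      (hii τ₂ 0 τ₁ le_rfl hτ₁ hτ₁T h₁₂) (hii τ₂ τ₁ τ₂ hτ₁ h₁₂ hτ₂ le_rfl),
      intervalIntegral.integral_of_le hτ₁, intervalIntegral.integral_of_le h₁₂]
  have e1 : G τ₁ = ∫ s in Ioc 0 τ₁, (τ₁ - s) ^ c • f s := by
    rw [hG τ₁, intervalIntegral.integral_of_le hτ₁]
  set k1 : ℝ → ℝ := fun s => (τ₁ - s) ^ c - (τ₂ - s) ^ c with hk1_def
  have hAC : (∫ s in Ioc 0 τ₁, (τ₂ - s) ^ c • f s) - (∫ s in Ioc 0 τ₁, (τ₁ - s) ^ c • f s)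
      = -(∫ s in Ioc 0 τ₁, k1 s • f s) := by
    rw [← integral_sub (kint τ₂ 0 τ₁ le_rfl hτ₁T h₁₂) (kint τ₁ 0 τ₁ le_rfl hτ₁T le_rfl),
      ← integral_neg]
    refine setIntegral_congr_fun measurableSet_Ioc fun x hx => ?_
    simp only [hk1_def, sub_smul, neg_sub]
  -- second piece
  have p2 : ‖∫ s in Ioc τ₁ τ₂, (τ₂ - s) ^ c • f s‖ ≤
      ((1 - p) / (α - 1 - p)) ^ (1 - p) * K ^ p * D ^ (α - 1 - p) := by
    refine piece τ₁ τ₂ _ hτ₁ h₁₂ hτ₂ (aux_aesm (aux_kernel_contOn c τ₂ τ₁ τ₂ le_rfl))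
      (aux_ae_Ioc fun x hx => Real.rpow_nonneg (sub_nonneg.2 hx.2.le) _)
      (kfact τ₂ τ₁ τ₂ le_rfl) (le_of_eq ?_)
    rw [kval τ₂ τ₁ τ₂ h₁₂ le_rfl, sub_self, Real.zero_rpow hβ0.ne', sub_zero]
  -- first piece
  have hk1m : AEStronglyMeasurable k1 (volume.restrict (Ioc 0 τ₁)) :=
    aux_aesm ((aux_kernel_contOn c τ₁ 0 τ₁ le_rfl).sub (aux_kernel_contOn c τ₂ 0 τ₁ h₁₂))
  have hk10 : 0 ≤ᵐ[volume.restrict (Ioc 0 τ₁)] k1 := by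
    refine aux_ae_Ioc fun x hx => sub_nonneg.2 ?_
    exact Real.rpow_le_rpow_of_nonpos (sub_pos.2 hx.2) (by linarith) hc0.le
  have hk1P : Integrable (fun s => k1 s ^ P) (volume.restrict (Ioc 0 τ₁)) := by
    refine Integrable.mono' (kfact τ₁ 0 τ₁ le_rfl)
      (aux_aesm (((aux_kernel_contOn c τ₁ 0 τ₁ le_rfl).sub
        (aux_kernel_contOn c τ₂ 0 τ₁ h₁₂)).rpow_const fun x _ => Or.inr (by positivity)))
      (aux_ae_Ioc fun x hx => ?_)
    have h1 : 0 < τ₁ - x := sub_pos.2 hx.2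
    have h2 : (τ₂ - x) ^ c ≤ (τ₁ - x) ^ c :=
      Real.rpow_le_rpow_of_nonpos h1 (by linarith) hc0.le
    have h3 : 0 ≤ k1 x := sub_nonneg.2 h2
    rw [Real.norm_of_nonneg (Real.rpow_nonneg h3 _)]
    refine Real.rpow_le_rpow h3 ?_ (by positivity)
    exact sub_le_self _ (Real.rpow_nonneg (by linarith [hx.2.trans_le h₁₂]) _)
  have hk1b : (∫ s in Ioc 0 τ₁, k1 s ^ P) ≤ D ^ β / β := by
    have hint1 := kfact τ₁ 0 τ₁ le_rfl
    have hint2 := kfact τ₂ 0 τ₁ h₁₂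
    calc (∫ s in Ioc 0 τ₁, k1 s ^ P)
        ≤ ∫ s in Ioc 0 τ₁, (((τ₁ - s) ^ c) ^ P - ((τ₂ - s) ^ c) ^ P) := by
          refine integral_mono_ae hk1P (hint1.sub hint2) (aux_ae_Ioc fun x hx => ?_)
          have h1 : 0 < τ₁ - x := sub_pos.2 hx.2
          exact aux_rpow_sub_le (Real.rpow_nonneg (by linarith [hx.2.trans_le h₁₂]) _)
            (Real.rpow_le_rpow_of_nonpos h1 (by linarith) hc0.le) hPQ.lt.le
      _ = ((τ₁ - 0) ^ β - (τ₁ - τ₁) ^ β) / β - ((τ₂ - 0) ^ β - (τ₂ - τ₁) ^ β) / β := by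
          rw [integral_sub hint1 hint2, kval τ₁ 0 τ₁ hτ₁ le_rfl, kval τ₂ 0 τ₁ hτ₁ h₁₂]
      _ ≤ D ^ β / β := by
          rw [sub_self, Real.zero_rpow hβ0.ne', sub_zero, sub_zero, sub_zero, div_sub_div_same]
          have hm : τ₁ ^ β ≤ τ₂ ^ β := Real.rpow_le_rpow hτ₁ h₁₂ hβ0.le
          refine (div_le_div_iff_of_pos_right hβ0).2 ?_
          simp only [hD_def]
          linarith
  have p1 : ‖∫ s in Ioc 0 τ₁, k1 s • f s‖ ≤
      ((1 - p) / (α - 1 - p)) ^ (1 - p) * K ^ p * D ^ (α - 1 - p) :=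
    piece 0 τ₁ k1 le_rfl hτ₁ hτ₁T hk1m hk10 hk1P hk1b
  -- combine
  have hdecomp : G τ₂ - G τ₁ =
      (∫ s in Ioc τ₁ τ₂, (τ₂ - s) ^ c • f s) + -(∫ s in Ioc 0 τ₁, k1 s • f s) := by
    rw [split, e1, ← hAC]; abel
  have hgoal : (∫ s in (0:ℝ)..T, M₁ s ^ (1 / p)) = K := by
    rw [intervalIntegral.integral_of_le hT.le, hK_def]
    simp only [hQ_def, one_div]
  rw [hgoal, hdecomp]
  calc ‖(∫ s in Ioc τ₁ τ₂, (τ₂ - s) ^ c • f s) + -(∫ s in Ioc 0 τ₁, k1 s • f s)‖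
      ≤ ‖∫ s in Ioc τ₁ τ₂, (τ₂ - s) ^ c • f s‖ + ‖∫ s in Ioc 0 τ₁, k1 s • f s‖ := by
        refine (norm_add_le _ _).trans ?_
        rw [norm_neg]
    _ ≤ 2 * ((1 - p) / (α - 1 - p)) ^ (1 - p) * K ^ p * D ^ (α - 1 - p) := by
        have := add_le_add p2 p1
        linarith
end

section
/- Let 1 < α < 2, 0 < p < α − 1 and T > 0. Let X be a Banach space and let M₁ : [0, T] → [0, ∞) be measurable with M₁ ∈ L^{1/p}([0, T]). Then the family of functions { G_f : [0, T] → X, where G_f(t) = ∫₀^t (t − s)^{α−2} f(s) ds, taken over all strongly measurable f : [0, T] → X with ‖f(s)‖ ≤ M₁(s) for almost every s } is uniformly equicontinuous on [0, T]: for every ε > 0 there exists δ > 0 such that |τ₂ − τ₁| < δ implies ‖G_f(τ₂) − G_f(τ₁)‖ < ε for every admissible f. -/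
open MeasureTheory Set
open scoped ENNReal NNReal

private lemma sub_rpow_le_rpow_sub' {x y q : ℝ} (hy : 0 ≤ y) (hxy : y ≤ x) (hq : 1 ≤ q) :
    (x - y) ^ q ≤ x ^ q - y ^ q := by
  have hxy0 : 0 ≤ x - y := by linarith
  have hx : 0 ≤ x := le_trans hy hxy
  have key := NNReal.add_rpow_le_rpow_add (x - y).toNNReal y.toNNReal hq
  rw [← Real.toNNReal_add hxy0 hy, sub_add_cancel] at key
  have key' : (x - y) ^ q + y ^ q ≤ x ^ q := by
    calc (x - y) ^ q + y ^ q
        = (((x - y).toNNReal : ℝ)) ^ q + ((y.toNNReal : ℝ)) ^ q := by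
          rw [Real.coe_toNNReal _ hxy0, Real.coe_toNNReal _ hy]
      _ ≤ ((x.toNNReal : ℝ)) ^ q := by exact_mod_cast key
      _ = x ^ q := by rw [Real.coe_toNNReal _ hx]
  linarith

private lemma kernel_integrableOn' {γ : ℝ} (hγ : -1 < γ) (t u v : ℝ) (huv : u ≤ v) (hvt : v ≤ t) :
    IntegrableOn (fun s => (t - s) ^ γ) (Set.Ioo u v) := by
  have h := (intervalIntegral.intervalIntegrable_rpow' (a := t - v) (b := t - u) hγ).comp_sub_left t
  have h1 : t - (t - v) = v := by ring
  have h2 : t - (t - u) = u := by ring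
  rw [h1, h2] at h
  exact ((intervalIntegrable_iff_integrableOn_Ioc_of_le huv).1 h.symm).mono_set
    Set.Ioo_subset_Ioc_self

private lemma kernel_integral' {γ : ℝ} (hγ : -1 < γ) (t u v : ℝ) (huv : u ≤ v) (hvt : v ≤ t) :
    ∫ s in Set.Ioo u v, (t - s) ^ γ = ((t - u) ^ (γ + 1) - (t - v) ^ (γ + 1)) / (γ + 1) := by
  rw [← integral_Ioc_eq_integral_Ioo, ← intervalIntegral.integral_of_le huv,
    intervalIntegral.integral_comp_sub_left (fun x => x ^ γ) t,
    integral_rpow (Or.inl hγ)]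

private lemma holder_piece {X : Type*} [NormedAddCommGroup X] [NormedSpace ℝ X] [CompleteSpace X]
    {p T : ℝ} (hp₀ : 0 < p) (hp₁ : p < 1)
    {M₁ : ℝ → ℝ} (hM₁meas : Measurable M₁) (hM₁nonneg : ∀ s, 0 ≤ M₁ s)
    (hM₁int : IntegrableOn (fun s => M₁ s ^ (1 / p)) (Set.Icc 0 T))
    {a b : ℝ} (hsub : Set.Ioo a b ⊆ Set.Icc 0 T)
    {k : ℝ → ℝ} (hk_meas : Measurable k) (hk_nonneg : ∀ s ∈ Set.Ioo a b, 0 ≤ k s)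
    (hkq : IntegrableOn (fun s => k s ^ (1 - p)⁻¹) (Set.Ioo a b))
    {f : ℝ → X} (hf : AEStronglyMeasurable f (volume.restrict (Set.Icc 0 T)))
    (hfb : ∀ᵐ s ∂volume.restrict (Set.Icc 0 T), ‖f s‖ ≤ M₁ s) :
    IntegrableOn (fun s => k s • f s) (Set.Ioo a b) ∧
      ‖∫ s in Set.Ioo a b, k s • f s‖ ≤
        (∫ s in Set.Ioo a b, k s ^ (1 - p)⁻¹) ^ (1 - p) *
          (∫ s in Set.Icc (0:ℝ) T, M₁ s ^ (1 / p)) ^ p := by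
  set q : ℝ := (1 - p)⁻¹ with hq_def
  have h1p : 0 < 1 - p := by linarith
  have hq_pos : 0 < q := inv_pos.2 h1p
  have hq1 : 1 < q := (one_lt_inv₀ h1p).2 (by linarith)
  have hconj : q.HolderConjugate (1 / p) := by
    rw [Real.holderConjugate_iff]
    constructor
    · exact hq1
    · rw [hq_def, inv_inv, one_div, inv_inv]; ring
  set μab := volume.restrict (Set.Ioo a b) with hμab
  have hfab : AEStronglyMeasurable f μab :=
    hf.mono_measure (Measure.restrict_mono hsub le_rfl)
  have hfbab : ∀ᵐ s ∂μab, ‖f s‖ ≤ M₁ s := ae_restrict_of_ae_restrict_of_subset hsub hfb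
  have hk_ae : ∀ᵐ s ∂μab, 0 ≤ k s :=
    (ae_restrict_iff' measurableSet_Ioo).2 (Filter.Eventually.of_forall hk_nonneg)
  have hq_ne0 : ENNReal.ofReal q ≠ 0 := by
    simp [ENNReal.ofReal_eq_zero, not_le, hq_pos]
  have hp_inv_pos : 0 < 1 / p := by positivity
  have hp_ne0 : ENNReal.ofReal (1 / p) ≠ 0 := by
    simp [ENNReal.ofReal_eq_zero, not_le, hp_inv_pos, hp₀]

  -- Memℒp of k
  have h1 : Integrable (fun s => ‖k s‖ ^ q) μab := by
    refine hkq.congr ?_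
    filter_upwards [hk_ae] with s hs
    rw [Real.norm_of_nonneg hs]
  have hkmem : MemLp k (ENNReal.ofReal q) μab := by
    refine (memLp_norm_rpow_iff hk_meas.aestronglyMeasurable hq_ne0 ENNReal.ofReal_ne_top).1 ?_
    rw [ENNReal.div_self hq_ne0 ENNReal.ofReal_ne_top, ENNReal.toReal_ofReal hq_pos.le]
    exact memLp_one_iff_integrable.2 h1
  -- Memℒp of M₁
  have h2 : Integrable (fun s => ‖M₁ s‖ ^ (1 / p)) μab := by
    refine (hM₁int.mono_set hsub).congr ?_
    refine Filter.Eventually.of_forall fun s => ?_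
    simp [Real.norm_of_nonneg (hM₁nonneg s)]
  have hMmem : MemLp M₁ (ENNReal.ofReal (1 / p)) μab := by
    refine (memLp_norm_rpow_iff hM₁meas.aestronglyMeasurable hp_ne0 ENNReal.ofReal_ne_top).1 ?_
    rw [ENNReal.div_self hp_ne0 ENNReal.ofReal_ne_top, ENNReal.toReal_ofReal hp_inv_pos.le]
    exact memLp_one_iff_integrable.2 h2
  -- integrability of the product k * M₁
  have hprod : Integrable (fun s => k s * M₁ s) μab := by
    have hexp : (1 : ℝ≥0∞) / 1 = 1 / ENNReal.ofReal q + 1 / ENNReal.ofReal (1 / p) := by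
      have e1 : (1 : ℝ≥0∞) / ENNReal.ofReal q = ENNReal.ofReal (1 - p) := by
        rw [one_div, ← ENNReal.ofReal_inv_of_pos hq_pos, hq_def, inv_inv]
      have e2 : (1 : ℝ≥0∞) / ENNReal.ofReal (1 / p) = ENNReal.ofReal p := by
        rw [one_div, ← ENNReal.ofReal_inv_of_pos hp_inv_pos, one_div, inv_inv]
      rw [e1, e2, ← ENNReal.ofReal_add (by linarith) hp₀.le]
      norm_num
    haveI : ENNReal.HolderTriple (ENNReal.ofReal q) (ENNReal.ofReal (1 / p)) 1 :=
      ⟨by simp only [one_div] at hexp ⊢; exact hexp.symm⟩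
    have := MemLp.smul (r := 1) hMmem hkmem
    have h' : Integrable (k • M₁) μab := memLp_one_iff_integrable.1 this
    exact h'
  -- integrability of k • f
  have hkf : Integrable (fun s => k s • f s) μab := by
    refine Integrable.mono' hprod (hk_meas.aestronglyMeasurable.smul hfab) ?_
    filter_upwards [hfbab, hk_ae] with s hs hks
    rw [norm_smul, Real.norm_of_nonneg hks]
    exact mul_le_mul_of_nonneg_left hs hks
  refine ⟨hkf, ?_⟩
  have hb1 : ‖∫ s in Set.Ioo a b, k s • f s‖ ≤ ∫ s in Set.Ioo a b, k s * M₁ s := by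
    refine norm_integral_le_of_norm_le hprod ?_
    filter_upwards [hfbab, hk_ae] with s hs hks
    rw [norm_smul, Real.norm_of_nonneg hks]
    exact mul_le_mul_of_nonneg_left hs hks
  have hM₁ae : ∀ᵐ s ∂μab, 0 ≤ M₁ s := Filter.Eventually.of_forall hM₁nonneg
  have holder := integral_mul_le_Lp_mul_Lq_of_nonneg hconj hk_ae hM₁ae hkmem hMmem
  have e3 : 1 / q = 1 - p := by rw [hq_def, one_div, inv_inv]
  have e4 : 1 / (1 / p) = p := one_div_one_div p
  rw [e3, e4] at holder
  have hknn : 0 ≤ ∫ s in Set.Ioo a b, k s ^ q :=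
    setIntegral_nonneg measurableSet_Ioo fun s hs => Real.rpow_nonneg (hk_nonneg s hs) q
  have hsetmono : ∫ s in Set.Ioo a b, M₁ s ^ (1 / p) ≤ ∫ s in Set.Icc (0:ℝ) T, M₁ s ^ (1 / p) :=
    setIntegral_mono_set hM₁int
      (Filter.Eventually.of_forall fun s => Real.rpow_nonneg (hM₁nonneg s) _)
      (HasSubset.Subset.eventuallyLE hsub)
  have hMnn : 0 ≤ ∫ s in Set.Ioo a b, M₁ s ^ (1 / p) :=
    setIntegral_nonneg measurableSet_Ioo fun s _ => Real.rpow_nonneg (hM₁nonneg s) _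
  calc ‖∫ s in Set.Ioo a b, k s • f s‖ ≤ ∫ s in Set.Ioo a b, k s * M₁ s := hb1
    _ ≤ (∫ s in Set.Ioo a b, k s ^ q) ^ (1 - p) *
        (∫ s in Set.Ioo a b, M₁ s ^ (1 / p)) ^ p := holder
    _ ≤ (∫ s in Set.Ioo a b, k s ^ q) ^ (1 - p) *
        (∫ s in Set.Icc (0:ℝ) T, M₁ s ^ (1 / p)) ^ p := by
        exact mul_le_mul_of_nonneg_left (Real.rpow_le_rpow hMnn hsetmono hp₀.le)
          (Real.rpow_nonneg hknn _)

/-- Uniform equicontinuity of the family of fractional convolutions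
`G_f(t) = ∫₀^t (t-s)^{α-2} f(s) ds` over all strongly measurable `f` dominated a.e.
by a fixed `M₁ ∈ L^{1/p}([0,T])`. -/
theorem fractional_convolution_equicontinuous
    {X : Type*} [NormedAddCommGroup X] [NormedSpace ℝ X] [CompleteSpace X]
    (α p T : ℝ) (hα₁ : 1 < α) (hα₂ : α < 2) (hp₀ : 0 < p) (hpα : p < α - 1)
    (hT : 0 < T)
    (M₁ : ℝ → ℝ) (hM₁meas : Measurable M₁) (hM₁nonneg : ∀ s, 0 ≤ M₁ s)
    (hM₁int : IntegrableOn (fun s => M₁ s ^ (1 / p)) (Set.Icc 0 T)) :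
    ∀ ε > (0:ℝ), ∃ δ > (0:ℝ),
      ∀ τ₁ ∈ Set.Icc (0:ℝ) T, ∀ τ₂ ∈ Set.Icc (0:ℝ) T, |τ₂ - τ₁| < δ →
        ∀ f : ℝ → X,
          AEStronglyMeasurable f (volume.restrict (Set.Icc 0 T)) →
          (∀ᵐ s ∂volume.restrict (Set.Icc 0 T), ‖f s‖ ≤ M₁ s) →
          ‖(∫ s in (0:ℝ)..τ₂, (τ₂ - s) ^ (α - 2) • f s) -
              ∫ s in (0:ℝ)..τ₁, (τ₁ - s) ^ (α - 2) • f s‖ < ε := by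
  intro ε hε
  have hp1 : p < 1 := by linarith
  have h1p : 0 < 1 - p := by linarith
  set q : ℝ := (1 - p)⁻¹ with hq_def
  have hq_pos : 0 < q := inv_pos.2 h1p
  have hq1 : 1 ≤ q := by
    rw [hq_def, le_inv_comm₀ one_pos h1p]
    linarith
  set γ : ℝ := (α - 2) * q with hγ_def
  have hγ : -1 < γ := by
    have h := mul_lt_mul_of_pos_right (show p - 1 < α - 2 by linarith) (inv_pos.2 h1p)
    have e : (p - 1) * (1 - p)⁻¹ = -1 := by field_simp; ring
    rw [e] at h
    exact h
  have hγ1 : 0 < γ + 1 := by linarith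
  set K : ℝ := (∫ s in Set.Icc (0:ℝ) T, M₁ s ^ (1 / p)) ^ p with hK_def
  have hK0 : 0 ≤ K :=
    Real.rpow_nonneg (setIntegral_nonneg measurableSet_Icc
      fun s _ => Real.rpow_nonneg (hM₁nonneg s) _) p
  obtain ⟨δ, hδ0, hδ⟩ : ∃ δ > (0:ℝ), ∀ h : ℝ, 0 ≤ h → h < δ →
      2 * ((h ^ (γ + 1) / (γ + 1)) ^ (1 - p) * K) < ε := by
    rcases eq_or_lt_of_le hK0 with hK | hK
    · exact ⟨1, one_pos, fun h _ _ => by rw [← hK]; simpa using hε⟩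
    · have hB0 : 0 < (ε / (2 * K)) ^ (1 / (1 - p)) * (γ + 1) := by
        have : 0 < ε / (2 * K) := by positivity
        positivity
      refine ⟨((ε / (2 * K)) ^ (1 / (1 - p)) * (γ + 1)) ^ (γ + 1)⁻¹, by positivity,
        fun h h0 hlt => ?_⟩
      have h1 : h ^ (γ + 1) < (ε / (2 * K)) ^ (1 / (1 - p)) * (γ + 1) := by
        have := Real.rpow_lt_rpow h0 hlt hγ1
        rwa [Real.rpow_inv_rpow hB0.le (ne_of_gt hγ1)] at this
      have h2 : h ^ (γ + 1) / (γ + 1) < (ε / (2 * K)) ^ (1 / (1 - p)) :=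
        (div_lt_iff₀ hγ1).2 h1
      have h3 : (h ^ (γ + 1) / (γ + 1)) ^ (1 - p) < ε / (2 * K) := by
        have hεK : 0 < ε / (2 * K) := by positivity
        have := Real.rpow_lt_rpow (by positivity) h2 h1p
        rwa [one_div, Real.rpow_inv_rpow hεK.le (ne_of_gt h1p)] at this
      have hKne : K ≠ 0 := ne_of_gt hK
      calc 2 * ((h ^ (γ + 1) / (γ + 1)) ^ (1 - p) * K)
          < 2 * (ε / (2 * K) * K) := by
            have := mul_lt_mul_of_pos_right h3 hK
            linarith
        _ = ε := by field_simp
  refine ⟨δ, hδ0, ?_⟩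
  suffices key : ∀ τ₁ ∈ Set.Icc (0:ℝ) T, ∀ τ₂ ∈ Set.Icc (0:ℝ) T, τ₁ ≤ τ₂ → τ₂ - τ₁ < δ →
      ∀ f : ℝ → X, AEStronglyMeasurable f (volume.restrict (Set.Icc 0 T)) →
      (∀ᵐ s ∂volume.restrict (Set.Icc 0 T), ‖f s‖ ≤ M₁ s) →
      ‖(∫ s in (0:ℝ)..τ₂, (τ₂ - s) ^ (α - 2) • f s) -
          ∫ s in (0:ℝ)..τ₁, (τ₁ - s) ^ (α - 2) • f s‖ < ε by
    intro τ₁ h₁ τ₂ h₂ hlt f hfm hfb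
    rcases le_total τ₁ τ₂ with hle | hle
    · exact key τ₁ h₁ τ₂ h₂ hle (by rwa [abs_of_nonneg (by linarith)] at hlt) f hfm hfb
    · rw [norm_sub_rev]
      refine key τ₂ h₂ τ₁ h₁ hle ?_ f hfm hfb
      rw [abs_sub_comm] at hlt
      rwa [abs_of_nonneg (by linarith)] at hlt
  intro τ₁ hτ₁ τ₂ hτ₂ hle hlt f hfm hfb
  obtain ⟨hτ₁0, hτ₁T⟩ := hτ₁
  obtain ⟨hτ₂0, hτ₂T⟩ := hτ₂
  set k₁ : ℝ → ℝ := fun s => (τ₁ - s) ^ (α - 2) with hk₁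
  set k₂ : ℝ → ℝ := fun s => (τ₂ - s) ^ (α - 2) with hk₂
  set kd : ℝ → ℝ := fun s => k₁ s - k₂ s with hkd
  have hk₁m : Measurable k₁ := (measurable_const.sub measurable_id).pow measurable_const
  have hk₂m : Measurable k₂ := (measurable_const.sub measurable_id).pow measurable_const
  have hsub₁ : Set.Ioo (0:ℝ) τ₁ ⊆ Set.Icc (0:ℝ) T :=
    fun s hs => ⟨hs.1.le, hs.2.le.trans hτ₁T⟩
  have hsub₂ : Set.Ioo τ₁ τ₂ ⊆ Set.Icc (0:ℝ) T :=
    fun s hs => ⟨hτ₁0.trans hs.1.le, hs.2.le.trans hτ₂T⟩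
  -- pointwise estimates on `Ioo 0 τ₁`
  have hpt : ∀ s ∈ Set.Ioo (0:ℝ) τ₁, 0 ≤ kd s ∧
      kd s ^ q ≤ (τ₁ - s) ^ γ - (τ₂ - s) ^ γ := by
    intro s hs
    have hA : 0 < τ₁ - s := by linarith [hs.2]
    have hAB : τ₁ - s ≤ τ₂ - s := by linarith
    have hb : k₂ s ≤ k₁ s := Real.rpow_le_rpow_of_nonpos hA hAB (by linarith)
    have hbnn : 0 ≤ k₂ s := Real.rpow_nonneg (by linarith) _
    refine ⟨sub_nonneg.2 hb, ?_⟩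
    have h1 := sub_rpow_le_rpow_sub' hbnn hb hq1
    have e1 : k₁ s ^ q = (τ₁ - s) ^ γ := by
      rw [hγ_def, Real.rpow_mul hA.le]
    have e2 : k₂ s ^ q = (τ₂ - s) ^ γ := by
      rw [hγ_def, Real.rpow_mul (by linarith : (0:ℝ) ≤ τ₂ - s)]
    rw [hkd]
    dsimp only
    rw [← e1, ← e2]
    exact h1
  have hI1γ : IntegrableOn (fun s => (τ₁ - s) ^ γ) (Set.Ioo 0 τ₁) :=
    kernel_integrableOn' hγ τ₁ 0 τ₁ hτ₁0 le_rfl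
  have hI2γ : IntegrableOn (fun s => (τ₂ - s) ^ γ) (Set.Ioo 0 τ₁) :=
    kernel_integrableOn' hγ τ₂ 0 τ₁ hτ₁0 hle
  have hI2γ' : IntegrableOn (fun s => (τ₂ - s) ^ γ) (Set.Ioo τ₁ τ₂) :=
    kernel_integrableOn' hγ τ₂ τ₁ τ₂ hle le_rfl
  have hkdq_int : IntegrableOn (fun s => kd s ^ q) (Set.Ioo 0 τ₁) := by
    refine Integrable.mono' hI1γ
      (((hk₁m.sub hk₂m).pow measurable_const).aestronglyMeasurable) ?_
    rw [ae_restrict_iff' measurableSet_Ioo]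
    refine Filter.Eventually.of_forall fun s hs => ?_
    obtain ⟨h0, hb⟩ := hpt s hs
    rw [Real.norm_of_nonneg (Real.rpow_nonneg h0 q)]
    have h2 : (0:ℝ) ≤ (τ₂ - s) ^ γ := Real.rpow_nonneg (by linarith [hs.2]) _
    linarith
  have eq₁ : Set.EqOn (fun s => (τ₁ - s) ^ γ) (fun s => k₁ s ^ q) (Set.Ioo 0 τ₁) := by
    intro s hs
    dsimp only
    rw [hγ_def, Real.rpow_mul (by linarith [hs.2] : (0:ℝ) ≤ τ₁ - s)]
  have eq₂ : Set.EqOn (fun s => (τ₂ - s) ^ γ) (fun s => k₂ s ^ q) (Set.Ioo 0 τ₁) := by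
    intro s hs
    dsimp only
    rw [hγ_def, Real.rpow_mul (by linarith [hs.2] : (0:ℝ) ≤ τ₂ - s)]
  have eq₂' : Set.EqOn (fun s => (τ₂ - s) ^ γ) (fun s => k₂ s ^ q) (Set.Ioo τ₁ τ₂) := by
    intro s hs
    dsimp only
    rw [hγ_def, Real.rpow_mul (by linarith [hs.2] : (0:ℝ) ≤ τ₂ - s)]
  have hk₁q_int : IntegrableOn (fun s => k₁ s ^ q) (Set.Ioo 0 τ₁) :=
    hI1γ.congr_fun eq₁ measurableSet_Ioo
  have hk₂q_int₁ : IntegrableOn (fun s => k₂ s ^ q) (Set.Ioo 0 τ₁) :=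
    hI2γ.congr_fun eq₂ measurableSet_Ioo
  have hk₂q_int₂ : IntegrableOn (fun s => k₂ s ^ q) (Set.Ioo τ₁ τ₂) :=
    hI2γ'.congr_fun eq₂' measurableSet_Ioo
  -- Hölder pieces
  have Hd := holder_piece hp₀ hp1 hM₁meas hM₁nonneg hM₁int hsub₁ (hk₁m.sub hk₂m)
    (fun s hs => (hpt s hs).1) hkdq_int hfm hfb
  have H1 := (holder_piece hp₀ hp1 hM₁meas hM₁nonneg hM₁int hsub₁ hk₁m
    (fun s hs => Real.rpow_nonneg (by linarith [hs.2] : (0:ℝ) ≤ τ₁ - s) _)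
    hk₁q_int hfm hfb).1
  have H2a := (holder_piece hp₀ hp1 hM₁meas hM₁nonneg hM₁int hsub₁ hk₂m
    (fun s hs => Real.rpow_nonneg (by linarith [hs.2] : (0:ℝ) ≤ τ₂ - s) _)
    hk₂q_int₁ hfm hfb).1
  have H2b := holder_piece hp₀ hp1 hM₁meas hM₁nonneg hM₁int hsub₂ hk₂m
    (fun s hs => Real.rpow_nonneg (by linarith [hs.2] : (0:ℝ) ≤ τ₂ - s) _)
    hk₂q_int₂ hfm hfb
  -- convert to interval integrability
  have toII : ∀ {u v : ℝ}, u ≤ v → ∀ {g : ℝ → X}, IntegrableOn g (Set.Ioo u v) →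
      IntervalIntegrable g volume u v := by
    intro u v huv g hg
    rw [intervalIntegrable_iff_integrableOn_Ioc_of_le huv,
      integrableOn_Ioc_iff_integrableOn_Ioo]
    exact hg
  have hII2a : IntervalIntegrable (fun s => k₂ s • f s) volume 0 τ₁ := toII hτ₁0 H2a
  have hII2b : IntervalIntegrable (fun s => k₂ s • f s) volume τ₁ τ₂ := toII hle H2b.1
  -- decomposition
  have hsplit : (∫ s in (0:ℝ)..τ₂, k₂ s • f s) =
      (∫ s in (0:ℝ)..τ₁, k₂ s • f s) + ∫ s in τ₁..τ₂, k₂ s • f s :=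
    (intervalIntegral.integral_add_adjacent_intervals hII2a hII2b).symm
  have eIoo : ∀ (u v : ℝ), u ≤ v → ∀ g : ℝ → X,
      (∫ s in u..v, g s) = ∫ s in Set.Ioo u v, g s := by
    intro u v huv g
    rw [intervalIntegral.integral_of_le huv, integral_Ioc_eq_integral_Ioo]
  have hterm1 : (∫ s in (0:ℝ)..τ₁, k₂ s • f s) - (∫ s in (0:ℝ)..τ₁, k₁ s • f s) =
      -∫ s in Set.Ioo (0:ℝ) τ₁, kd s • f s := by
    rw [eIoo 0 τ₁ hτ₁0, eIoo 0 τ₁ hτ₁0, ← integral_sub H2a H1, ← integral_neg]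
    congr 1
    funext s
    rw [hkd]
    dsimp only
    rw [sub_smul]
    abel
  -- kernel q-integral bounds
  have hAkd : (∫ s in Set.Ioo (0:ℝ) τ₁, kd s ^ q) ≤ (τ₂ - τ₁) ^ (γ + 1) / (γ + 1) := by
    have step1 : (∫ s in Set.Ioo (0:ℝ) τ₁, kd s ^ q) ≤
        ∫ s in Set.Ioo (0:ℝ) τ₁, ((τ₁ - s) ^ γ - (τ₂ - s) ^ γ) :=
      setIntegral_mono_on hkdq_int (hI1γ.sub hI2γ) measurableSet_Ioo
        (fun s hs => (hpt s hs).2)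
    have step2 : (∫ s in Set.Ioo (0:ℝ) τ₁, ((τ₁ - s) ^ γ - (τ₂ - s) ^ γ)) =
        ((τ₁ - 0) ^ (γ + 1) - (τ₁ - τ₁) ^ (γ + 1)) / (γ + 1) -
          ((τ₂ - 0) ^ (γ + 1) - (τ₂ - τ₁) ^ (γ + 1)) / (γ + 1) := by
      rw [integral_sub hI1γ hI2γ, kernel_integral' hγ τ₁ 0 τ₁ hτ₁0 le_rfl,
        kernel_integral' hγ τ₂ 0 τ₁ hτ₁0 hle]
    have hmono : τ₁ ^ (γ + 1) ≤ τ₂ ^ (γ + 1) := Real.rpow_le_rpow hτ₁0 hle hγ1.le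
    have hz : ((0:ℝ)) ^ (γ + 1) = 0 := Real.zero_rpow (ne_of_gt hγ1)
    rw [step2] at step1
    rw [sub_self, sub_zero, sub_zero, hz, sub_zero] at step1
    calc (∫ s in Set.Ioo (0:ℝ) τ₁, kd s ^ q)
        ≤ τ₁ ^ (γ + 1) / (γ + 1) - (τ₂ ^ (γ + 1) - (τ₂ - τ₁) ^ (γ + 1)) / (γ + 1) := step1
      _ ≤ (τ₂ - τ₁) ^ (γ + 1) / (γ + 1) := by
          rw [div_sub_div_same, div_le_div_iff₀ hγ1 hγ1]
          nlinarith [hmono]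
  have hAk2 : (∫ s in Set.Ioo τ₁ τ₂, k₂ s ^ q) = (τ₂ - τ₁) ^ (γ + 1) / (γ + 1) := by
    rw [← setIntegral_congr_fun measurableSet_Ioo eq₂',
      kernel_integral' hγ τ₂ τ₁ τ₂ hle le_rfl, sub_self,
      Real.zero_rpow (ne_of_gt hγ1), sub_zero]
  have hnn1 : 0 ≤ ∫ s in Set.Ioo (0:ℝ) τ₁, kd s ^ q :=
    setIntegral_nonneg measurableSet_Ioo fun s hs => Real.rpow_nonneg (hpt s hs).1 q
  have bound1 : ‖∫ s in Set.Ioo (0:ℝ) τ₁, kd s • f s‖ ≤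
      ((τ₂ - τ₁) ^ (γ + 1) / (γ + 1)) ^ (1 - p) * K :=
    le_trans Hd.2 (mul_le_mul_of_nonneg_right (Real.rpow_le_rpow hnn1 hAkd h1p.le) hK0)
  have bound2 : ‖∫ s in Set.Ioo τ₁ τ₂, k₂ s • f s‖ ≤
      ((τ₂ - τ₁) ^ (γ + 1) / (γ + 1)) ^ (1 - p) * K := by
    have hb2 := H2b.2
    rwa [hAk2] at hb2
  calc ‖(∫ s in (0:ℝ)..τ₂, k₂ s • f s) - ∫ s in (0:ℝ)..τ₁, k₁ s • f s‖
      = ‖((∫ s in (0:ℝ)..τ₁, k₂ s • f s) - ∫ s in (0:ℝ)..τ₁, k₁ s • f s) +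
          ∫ s in τ₁..τ₂, k₂ s • f s‖ := by rw [hsplit, add_sub_right_comm]
    _ ≤ ‖(∫ s in (0:ℝ)..τ₁, k₂ s • f s) - ∫ s in (0:ℝ)..τ₁, k₁ s • f s‖ +
          ‖∫ s in τ₁..τ₂, k₂ s • f s‖ := norm_add_le _ _
    _ = ‖∫ s in Set.Ioo (0:ℝ) τ₁, kd s • f s‖ + ‖∫ s in Set.Ioo τ₁ τ₂, k₂ s • f s‖ := by
          rw [hterm1, norm_neg, eIoo τ₁ τ₂ hle]
    _ ≤ ((τ₂ - τ₁) ^ (γ + 1) / (γ + 1)) ^ (1 - p) * K +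
          ((τ₂ - τ₁) ^ (γ + 1) / (γ + 1)) ^ (1 - p) * K := add_le_add bound1 bound2
    _ = 2 * (((τ₂ - τ₁) ^ (γ + 1) / (γ + 1)) ^ (1 - p) * K) := by ring
    _ < ε := hδ (τ₂ - τ₁) (by linarith) hlt
end
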